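/- Let A be a lattice with a least element 0 such that for every lattice L with a least element, the tensor product A⊗L is a lattice. Then for every lattice L with a least element, A⊗L is a capped tensor product. (In the paper's terminology: every weakly amenable lattice is amenable.) -/
import Mathlib

/-! Tensor products of lattices with zero: bi-ideals, pure tensors,
compact bi-ideals, capped bi-ideals. -/

universe u v

section TensorDefs

variable {A : Type u} {B : Type v}

/-- The set `⊥_{A,B} = (A × {0}) ∪ ({0} × B)`. -/
def tensorBot (A : Type u) (B : Type v) [Lattice A] [OrderBot A]
    [Lattice B] [OrderBot B] : Set (A × B) :=
  {p | p.1 = ⊥ ∨ p.2 = ⊥}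

/-- A bi-ideal of `A × B`: a down-set containing `⊥_{A,B}` and closed under
lateral joins. -/
def IsBiIdeal [Lattice A] [OrderBot A] [Lattice B] [OrderBot B]
    (I : Set (A × B)) : Prop :=
  tensorBot A B ⊆ I ∧
  (∀ p ∈ I, ∀ q : A × B, q.1 ≤ p.1 → q.2 ≤ p.2 → q ∈ I) ∧
  (∀ a : A, ∀ b b' : B, (a, b) ∈ I → (a, b') ∈ I → (a, b ⊔ b') ∈ I) ∧
  (∀ a a' : A, ∀ b : B, (a, b) ∈ I → (a', b) ∈ I → (a ⊔ a', b) ∈ I)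

/-- The pure tensor `a ⊗ b = ⊥_{A,B} ∪ {(x,y) : x ≤ a ∧ y ≤ b}`. -/
def pureTensor [Lattice A] [OrderBot A] [Lattice B] [OrderBot B]
    (a : A) (b : B) : Set (A × B) :=
  tensorBot A B ∪ {p | p.1 ≤ a ∧ p.2 ≤ b}

/-- The smallest bi-ideal of `A × B` containing a given set, i.e. the join in the
lattice `A ⊗̄ B` of bi-ideals of the pure tensors contained in it. -/
def biIdealGen [Lattice A] [OrderBot A] [Lattice B] [OrderBot B]
    (S : Set (A × B)) : Set (A × B) :=
  ⋂₀ {I : Set (A × B) | IsBiIdeal I ∧ S ⊆ I}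

/-- The compact elements of `A ⊗̄ B` are exactly the bi-ideals that are finite
joins of pure tensors; these form the tensor product `A ⊗ B`. -/
def IsCompactBiIdeal [Lattice A] [OrderBot A] [Lattice B] [OrderBot B]
    (I : Set (A × B)) : Prop :=
  ∃ s : Finset (A × B), I = biIdealGen (⋃ p ∈ s, pureTensor p.1 p.2)

/-- `A ⊗ B` is a lattice iff the intersection of any two compact bi-ideals is
compact. -/
def TensorIsLattice (A : Type u) (B : Type v) [Lattice A] [OrderBot A]
    [Lattice B] [OrderBot B] : Prop :=
  ∀ I J : Set (A × B), IsCompactBiIdeal I → IsCompactBiIdeal J →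
    IsCompactBiIdeal (I ∩ J)

/-- A bi-ideal is capped if it is the down-set generated by `Γ ∪ ⊥_{A,B}` for some
finite `Γ ⊆ A × B`. -/
def IsCappedBiIdeal [Lattice A] [OrderBot A] [Lattice B] [OrderBot B]
    (I : Set (A × B)) : Prop :=
  ∃ Γ : Finset (A × B),
    I = tensorBot A B ∪ {q : A × B | ∃ p ∈ Γ, q.1 ≤ p.1 ∧ q.2 ≤ p.2}

/-- `A ⊗ B` is a capped tensor product if every element of `A ⊗ B` (i.e. every
compact bi-ideal of `A × B`) is capped. -/
def IsCappedTensorProduct (A : Type u) (B : Type v) [Lattice A] [OrderBot A]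
    [Lattice B] [OrderBot B] : Prop :=
  ∀ I : Set (A × B), IsCompactBiIdeal I → IsCappedBiIdeal I

end TensorDefs

/-! ### Auxiliary development

We prove the theorem following this strategy:

* `biIdealGen` of a union of pure tensors is `tensorBot` together with the
  down-set of the closure `Tcl` of the generators under the two "twisted"
  operations `(x,y),(x',y') ↦ (x ⊓ x', y ⊔ y')` and `(x ⊔ x', y ⊓ y')`.
* Given a compact bi-ideal of `A × L` generated by `s`, we pass to the gadget
  lattice `LS L` of pairs `(e, S)` with `S` a lower set of `L` containing
  `Iic e`.  `L` embeds via `ι : e ↦ (e, Iic e)` and there is a "generic"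
  element `t = (⊥, ⊤)` with `ι d ⊓ t = (⊥, Iic d)`: meets with `t` remember
  `d`, and the tags `Iic d` are join-prime among lower sets.
* By the hypothesis, the intersection of `⋁ aᵢ ⊗ ι bᵢ` with the pure tensor
  `a* ⊗ t` is compact, generated by a finite set `G`.  An invariant induction
  over `Tcl G` shows that every element of `Tcl s` is dominated by one of the
  finitely many `(⊔,⊓)`-combinations of elements of `Tcl s` attached to
  subsets of `G`; this is exactly cappedness. -/

set_option linter.unusedSectionVars false

namespace WAme

universe w₁ w₂ w₃

variable {A : Type w₁} {B : Type w₂} [Lattice A] [OrderBot A] [Lattice B] [OrderBot B]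

/-- Twisted closure: closure of a set of pairs under the two "lateral" lattice
operations. -/
inductive Tcl (S : Set (A × B)) : A × B → Prop
  | base {x : A × B} (hx : x ∈ S) : Tcl S x
  | meet {x y : A × B} (hx : Tcl S x) (hy : Tcl S y) : Tcl S (x.1 ⊓ y.1, x.2 ⊔ y.2)
  | join {x y : A × B} (hx : Tcl S x) (hy : Tcl S y) : Tcl S (x.1 ⊔ y.1, x.2 ⊓ y.2)

/-- `tensorBot` together with the down-set of the twisted closure. -/
def twHull (S : Set (A × B)) : Set (A × B) :=
  tensorBot A B ∪ {q | ∃ v, Tcl S v ∧ q.1 ≤ v.1 ∧ q.2 ≤ v.2}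

lemma twHull_isBiIdeal (S : Set (A × B)) : IsBiIdeal (twHull S) := by
  refine ⟨Set.subset_union_left, ?_, ?_, ?_⟩
  · rintro p hp q hq1 hq2
    rcases hp with hp | ⟨v, hv, h1, h2⟩
    · rcases hp with h | h
      · exact Or.inl (Or.inl (le_bot_iff.1 (h ▸ hq1)))
      · exact Or.inl (Or.inr (le_bot_iff.1 (h ▸ hq2)))
    · exact Or.inr ⟨v, hv, hq1.trans h1, hq2.trans h2⟩
  · rintro a b b' hb hb'
    rcases hb with hb | ⟨v, hv, h1, h2⟩
    · rcases hb with h | h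
      · exact Or.inl (Or.inl h)
      · rcases hb' with hb' | ⟨w, hw, g1, g2⟩
        · rcases hb' with h' | h'
          · exact Or.inl (Or.inl h')
          · exact Or.inl (Or.inr (by simp only at h h' ⊢; rw [h, h', bot_sup_eq]))
        · refine Or.inr ⟨w, hw, g1, ?_⟩
          simp only at h
          rw [h, bot_sup_eq]; exact g2
    · rcases hb' with hb' | ⟨w, hw, g1, g2⟩
      · rcases hb' with h' | h'
        · exact Or.inl (Or.inl h')
        · refine Or.inr ⟨v, hv, h1, ?_⟩
          simp only at h'
          rw [h', sup_bot_eq]; exact h2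
      · exact Or.inr ⟨(v.1 ⊓ w.1, v.2 ⊔ w.2), Tcl.meet hv hw,
          le_inf h1 g1, sup_le_sup h2 g2⟩
  · rintro a a' b ha ha'
    rcases ha with ha | ⟨v, hv, h1, h2⟩
    · rcases ha with h | h
      · rcases ha' with ha' | ⟨w, hw, g1, g2⟩
        · rcases ha' with h' | h'
          · exact Or.inl (Or.inl (by simp only at h h' ⊢; rw [h, h', bot_sup_eq]))
          · exact Or.inl (Or.inr h')
        · refine Or.inr ⟨w, hw, ?_, g2⟩
          simp only at h
          rw [h, bot_sup_eq]; exact g1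
      · exact Or.inl (Or.inr h)
    · rcases ha' with ha' | ⟨w, hw, g1, g2⟩
      · rcases ha' with h' | h'
        · refine Or.inr ⟨v, hv, ?_, h2⟩
          simp only at h'
          rw [h', sup_bot_eq]; exact h1
        · exact Or.inl (Or.inr h')
      · exact Or.inr ⟨(v.1 ⊔ w.1, v.2 ⊓ w.2), Tcl.join hv hw,
          sup_le_sup h1 g1, le_inf h2 g2⟩

lemma subset_biIdealGen {S : Set (A × B)} : S ⊆ biIdealGen S := by
  intro x hx I hI
  exact hI.2 hx

/-- The fundamental description of the bi-ideal generated by pure tensors. -/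
lemma biIdealGen_pures (S : Set (A × B)) :
    biIdealGen (⋃ p ∈ S, pureTensor p.1 p.2) = twHull S := by
  apply subset_antisymm
  · apply Set.sInter_subset_of_mem
    refine ⟨twHull_isBiIdeal S, ?_⟩
    intro q hq
    simp only [Set.mem_iUnion] at hq
    obtain ⟨p, hpS, hq⟩ := hq
    rcases hq with hq | hq
    · exact Or.inl hq
    · exact Or.inr ⟨p, Tcl.base hpS, hq.1, hq.2⟩
  · intro q hq I hI
    obtain ⟨hBi, hSub⟩ := hI
    have key : ∀ v : A × B, Tcl S v → ∀ q : A × B, q.1 ≤ v.1 → q.2 ≤ v.2 → q ∈ I := by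
      intro v hv
      induction hv with
      | base hx =>
        intro q h1 h2
        apply hSub
        simp only [Set.mem_iUnion]
        exact ⟨_, hx, Or.inr ⟨h1, h2⟩⟩
      | meet hx hy ihx ihy =>
        rename_i x y
        intro q h1 h2
        have hx' : (q.1, x.2) ∈ I := ihx _ (h1.trans inf_le_left) le_rfl
        have hy' : (q.1, y.2) ∈ I := ihy _ (h1.trans inf_le_right) le_rfl
        have := hBi.2.2.1 q.1 x.2 y.2 hx' hy'
        exact hBi.2.1 _ this q le_rfl h2
      | join hx hy ihx ihy =>
        rename_i x y
        intro q h1 h2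
        have hx' : (x.1, q.2) ∈ I := ihx _ le_rfl (h2.trans inf_le_left)
        have hy' : (y.1, q.2) ∈ I := ihy _ le_rfl (h2.trans inf_le_right)
        have := hBi.2.2.2 x.1 y.1 q.2 hx' hy'
        exact hBi.2.1 _ this q h1 le_rfl
    rcases hq with hq | ⟨v, hv, h1, h2⟩
    · exact hBi.1 hq
    · exact key v hv q h1 h2

lemma biIdealGen_finset (s : Finset (A × B)) :
    biIdealGen (⋃ p ∈ s, pureTensor p.1 p.2) = twHull (↑s : Set (A × B)) := by
  rw [← biIdealGen_pures, Finset.set_biUnion_coe]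

lemma Tcl_singleton {x v : A × B} (h : Tcl {x} v) : v = x := by
  induction h with
  | base hx => exact hx
  | meet hx hy ihx ihy => rw [ihx, ihy]; exact Prod.ext (inf_idem _) (sup_idem _)
  | join hx hy ihx ihy => rw [ihx, ihy]; exact Prod.ext (sup_idem _) (inf_idem _)

lemma twHull_singleton (x : A × B) : twHull {x} = pureTensor x.1 x.2 := by
  unfold twHull pureTensor
  ext q
  simp only [Set.mem_union, Set.mem_setOf_eq]
  constructor
  · rintro (h | ⟨v, hv, h1, h2⟩)
    · exact Or.inl h
    · rw [Tcl_singleton hv] at h1 h2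
      exact Or.inr ⟨h1, h2⟩
  · rintro (h | h)
    · exact Or.inl h
    · exact Or.inr ⟨x, Tcl.base rfl, h.1, h.2⟩

lemma pureTensor_compact (a : A) (b : B) : IsCompactBiIdeal (pureTensor a b) := by
  refine ⟨{(a, b)}, ?_⟩
  rw [biIdealGen_finset]
  simp only [Finset.coe_singleton]
  rw [twHull_singleton]

/-- First components of the twisted closure of a finset are bounded by the sup. -/
lemma Tcl_fst_le (s : Finset (A × B)) {v : A × B} (h : Tcl (↑s : Set (A × B)) v) :
    v.1 ≤ s.sup Prod.fst := by
  induction h with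
  | base hx => exact Finset.le_sup (f := Prod.fst) (by exact_mod_cast hx)
  | meet hx hy ihx ihy => exact inf_le_left.trans ihx
  | join hx hy ihx ihy => exact sup_le ihx ihy

/-- `(⊔,⊓)`-combinations over nonempty finite index sets stay in the closure. -/
lemma Tcl_supinf {γ : Type w₃} (S : Set (A × B)) (u : γ → A × B)
    (T : Finset γ) (hT : T.Nonempty) (hmem : ∀ g ∈ T, Tcl S (u g)) :
    Tcl S (T.sup (fun g => (u g).1), T.inf' hT (fun g => (u g).2)) := by
  induction hT using Finset.Nonempty.cons_induction with
  | singleton a =>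
    rw [Finset.sup_singleton, Finset.inf'_singleton]
    exact hmem a (Finset.mem_singleton_self a)
  | cons a T ha hT ih =>
    rw [Finset.sup_cons, Finset.inf'_cons hT]
    have h1 : Tcl S (u a) := hmem a (Finset.mem_cons_self a T)
    have h2 := ih (fun g hg => hmem g (Finset.mem_cons_of_mem hg))
    exact Tcl.join h1 h2

end WAme

namespace WAme2

universe w

/-- The gadget lattice: pairs `(e, S)` with `S` a lower set containing `Iic e`. -/
def LS (L : Type w) [Lattice L] [OrderBot L] : Type w :=
  {x : L × LowerSet L // LowerSet.Iic x.1 ≤ x.2}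

namespace LS

variable {L : Type w} [Lattice L] [OrderBot L]

instance : PartialOrder (LS L) := Subtype.partialOrder _

lemma le_iff {x y : LS L} : x ≤ y ↔ x.val.1 ≤ y.val.1 ∧ x.val.2 ≤ y.val.2 := by
  constructor
  · intro h; exact ⟨h.1, h.2⟩
  · intro h; exact ⟨h.1, h.2⟩

private lemma iic_mono {a b : L} (h : a ≤ b) : LowerSet.Iic a ≤ LowerSet.Iic b :=
  fun _ hz => le_trans hz h

instance : Lattice (LS L) where
  sup x y := ⟨(x.val.1 ⊔ y.val.1, x.val.2 ⊔ y.val.2 ⊔ LowerSet.Iic (x.val.1 ⊔ y.val.1)),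
    le_sup_right⟩
  le_sup_left x y := le_iff.2 ⟨le_sup_left, le_sup_left.trans le_sup_left⟩
  le_sup_right x y := le_iff.2 ⟨le_sup_right, le_sup_right.trans le_sup_left⟩
  sup_le x y z hxz hyz := le_iff.2 ⟨sup_le (le_iff.1 hxz).1 (le_iff.1 hyz).1,
    sup_le (sup_le (le_iff.1 hxz).2 (le_iff.1 hyz).2)
      ((iic_mono (sup_le (le_iff.1 hxz).1 (le_iff.1 hyz).1)).trans z.prop)⟩
  inf x y := ⟨(x.val.1 ⊓ y.val.1, x.val.2 ⊓ y.val.2),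
    le_inf ((iic_mono inf_le_left).trans x.prop) ((iic_mono inf_le_right).trans y.prop)⟩
  inf_le_left x y := le_iff.2 ⟨inf_le_left, inf_le_left⟩
  inf_le_right x y := le_iff.2 ⟨inf_le_right, inf_le_right⟩
  le_inf x y z hxy hxz := le_iff.2 ⟨le_inf (le_iff.1 hxy).1 (le_iff.1 hxz).1,
    le_inf (le_iff.1 hxy).2 (le_iff.1 hxz).2⟩

instance : OrderBot (LS L) where
  bot := ⟨(⊥, LowerSet.Iic ⊥), le_rfl⟩
  bot_le x := le_iff.2 ⟨bot_le, (iic_mono bot_le).trans x.prop⟩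

@[simp] lemma sup_val (x y : LS L) :
    (x ⊔ y).val = (x.val.1 ⊔ y.val.1, x.val.2 ⊔ y.val.2 ⊔ LowerSet.Iic (x.val.1 ⊔ y.val.1)) :=
  rfl

@[simp] lemma inf_val (x y : LS L) :
    (x ⊓ y).val = (x.val.1 ⊓ y.val.1, x.val.2 ⊓ y.val.2) := rfl

@[simp] lemma bot_val : (⊥ : LS L).val = (⊥, LowerSet.Iic ⊥) := rfl

/-- The canonical embedding of `L` into `LS L`. -/
def iota (e : L) : LS L := ⟨(e, LowerSet.Iic e), le_rfl⟩

@[simp] lemma iota_val (e : L) : (iota e).val = (e, LowerSet.Iic e) := rfl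

lemma iota_sup (d d' : L) : iota (d ⊔ d') = iota d ⊔ iota d' := by
  apply Subtype.ext
  rw [sup_val, iota_val, iota_val, iota_val]
  refine Prod.ext rfl ?_
  show LowerSet.Iic (d ⊔ d') = LowerSet.Iic d ⊔ LowerSet.Iic d' ⊔ LowerSet.Iic (d ⊔ d')
  rw [sup_eq_right.2 (sup_le (iic_mono le_sup_left) (iic_mono le_sup_right))]

lemma iota_inf (d d' : L) : iota (d ⊓ d') = iota d ⊓ iota d' := by
  apply Subtype.ext
  rw [inf_val, iota_val, iota_val, iota_val]
  refine Prod.ext rfl ?_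
  show LowerSet.Iic (d ⊓ d') = LowerSet.Iic d ⊓ LowerSet.Iic d'
  apply le_antisymm
  · exact le_inf (iic_mono inf_le_left) (iic_mono inf_le_right)
  · intro z hz
    exact le_inf (LowerSet.mem_inf_iff.1 hz).1 (LowerSet.mem_inf_iff.1 hz).2

/-- The "generic" element. -/
def tt : LS L := ⟨(⊥, ⊤), le_top⟩

@[simp] lemma tt_val : (tt : LS L).val = (⊥, ⊤) := rfl

lemma iota_inf_tt (d : L) :
    (iota d ⊓ tt : LS L).val = (⊥, LowerSet.Iic d) := by
  rw [inf_val, iota_val, tt_val]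
  exact Prod.ext (inf_bot_eq d) (inf_top_eq _)

lemma iota_inf_tt_ne_bot {d : L} (hd : d ≠ ⊥) : (iota d ⊓ tt : LS L) ≠ ⊥ := by
  intro h
  have h0 := congrArg Subtype.val h
  rw [iota_inf_tt, bot_val] at h0
  have h2 : LowerSet.Iic d = LowerSet.Iic (⊥ : L) := congrArg Prod.snd h0
  have h3 : d ∈ LowerSet.Iic (⊥ : L) := h2 ▸ (LowerSet.mem_Iic_iff.2 le_rfl)
  exact hd (le_bot_iff.1 (LowerSet.mem_Iic_iff.1 h3))

end LS

end WAme2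

section Main

open WAme WAme2 WAme2.LS

universe w₁ w₂

variable {A : Type w₁} {L : Type w₂} [Lattice A] [OrderBot A] [Lattice L] [OrderBot L]

/-- The twisted closure of the `ι`-image of a set is the `ι`-image of its
twisted closure. -/
lemma Tcl_image_of {S : Set (A × L)} {v : A × L} (h : Tcl S v) :
    Tcl ((fun p : A × L => (p.1, iota p.2)) '' S) (v.1, iota v.2) := by
  induction h with
  | base hx => exact Tcl.base (Set.mem_image_of_mem _ hx)
  | meet hx hy ihx ihy =>
    rename_i x y
    have := Tcl.meet ihx ihy
    simpa [iota_sup] using this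
  | join hx hy ihx ihy =>
    rename_i x y
    have := Tcl.join ihx ihy
    simpa [iota_inf] using this

lemma Tcl_image_rev {S : Set (A × L)} {w : A × LS L}
    (h : Tcl ((fun p : A × L => (p.1, iota p.2)) '' S) w) :
    ∃ v, Tcl S v ∧ w = (v.1, iota v.2) := by
  induction h with
  | base hx =>
    obtain ⟨v, hv, rfl⟩ := hx
    exact ⟨v, Tcl.base hv, rfl⟩
  | meet hx hy ihx ihy =>
    obtain ⟨v, hv, rfl⟩ := ihx
    obtain ⟨v', hv', rfl⟩ := ihy
    exact ⟨(v.1 ⊓ v'.1, v.2 ⊔ v'.2), Tcl.meet hv hv', by simp [iota_sup]⟩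
  | join hx hy ihx ihy =>
    obtain ⟨v, hv, rfl⟩ := ihx
    obtain ⟨v', hv', rfl⟩ := ihy
    exact ⟨(v.1 ⊔ v'.1, v.2 ⊓ v'.2), Tcl.join hv hv', by simp [iota_inf]⟩

/-- The key invariant, proved by induction over the twisted closure of the
finite generating set `G` of the intersection.  Here `(a)` states that
elements with a nontrivial "untagged part" have trivial first coordinate, and
`(b)` traces every element of a tag back to an intersection of generator tags
whose first coordinates jointly dominate. -/
lemma tag_invariant (G : Finset (A × LS L))
    (HGE : ∀ g ∈ G, g.1 = ⊥ ∨ (g.2).val.1 = ⊥) :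
    ∀ w : A × LS L, Tcl (↑G : Set (A × LS L)) w →
      (w.1 = ⊥ ∨ w.2.val.1 = ⊥) ∧
      (∀ d : L, d ∈ w.2.val.2 → d = ⊥ ∨ w.1 = ⊥ ∨
        ∃ T : Finset (A × LS L), T.Nonempty ∧
          (∀ g ∈ T, g ∈ G ∧ g.1 ≠ ⊥ ∧ g.2 ≠ ⊥) ∧
          (∀ g ∈ T, d ∈ (g.2).val.2) ∧ w.1 ≤ T.sup Prod.fst) := by
  classical
  intro w hw
  induction hw with
  | base hx =>
    rename_i g
    have hgG : g ∈ G := by exact_mod_cast hx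
    constructor
    · exact HGE g hgG
    · intro d hd
      by_cases h1 : g.1 = ⊥
      · exact Or.inr (Or.inl h1)
      by_cases h2 : g.2 = ⊥
      · left
        rw [h2] at hd
        have : d ∈ LowerSet.Iic (⊥ : L) := by
          simpa using hd
        exact le_bot_iff.1 (LowerSet.mem_Iic_iff.1 this)
      · refine Or.inr (Or.inr ⟨{g}, Finset.singleton_nonempty g, ?_, ?_, ?_⟩)
        · intro g' hg'
          rw [Finset.mem_singleton] at hg'
          subst hg'
          exact ⟨hgG, h1, h2⟩
        · intro g' hg'
          rw [Finset.mem_singleton] at hg'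
          subst hg'
          exact hd
        · rw [Finset.sup_singleton]
  | meet hx hy ihx ihy =>
    rename_i x y
    obtain ⟨iax, ibx⟩ := ihx
    obtain ⟨iay, iby⟩ := ihy
    constructor
    · -- (a) for the meet
      show x.1 ⊓ y.1 = ⊥ ∨ (x.2 ⊔ y.2).val.1 = ⊥
      rcases iax with h | h
      · exact Or.inl (by rw [h, bot_inf_eq])
      · rcases iay with h' | h'
        · exact Or.inl (by rw [h', inf_bot_eq])
        · right
          rw [sup_val]
          show x.2.val.1 ⊔ y.2.val.1 = ⊥
          rw [h, h', bot_sup_eq]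
    · -- (b) for the meet
      intro d hd
      rw [sup_val] at hd
      have hd' : d ∈ x.2.val.2 ⊔ y.2.val.2 ⊔ LowerSet.Iic (x.2.val.1 ⊔ y.2.val.1) := hd
      rw [LowerSet.mem_sup_iff, LowerSet.mem_sup_iff] at hd'
      rcases hd' with (hd' | hd') | hd'
      · rcases ibx d hd' with h | h | ⟨T, hT1, hT2, hT3, hT4⟩
        · exact Or.inl h
        · exact Or.inr (Or.inl (by show x.1 ⊓ y.1 = ⊥; rw [h, bot_inf_eq]))
        · exact Or.inr (Or.inr ⟨T, hT1, hT2, hT3, inf_le_left.trans hT4⟩)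
      · rcases iby d hd' with h | h | ⟨T, hT1, hT2, hT3, hT4⟩
        · exact Or.inl h
        · exact Or.inr (Or.inl (by show x.1 ⊓ y.1 = ⊥; rw [h, inf_bot_eq]))
        · exact Or.inr (Or.inr ⟨T, hT1, hT2, hT3, inf_le_right.trans hT4⟩)
      · -- d is in the closing segment `Iic (E_x ⊔ E_y)`
        have hdle : d ≤ x.2.val.1 ⊔ y.2.val.1 := LowerSet.mem_Iic_iff.1 hd'
        rcases iax with h | h
        · exact Or.inr (Or.inl (by show x.1 ⊓ y.1 = ⊥; rw [h, bot_inf_eq]))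
        · rcases iay with h' | h'
          · exact Or.inr (Or.inl (by show x.1 ⊓ y.1 = ⊥; rw [h', inf_bot_eq]))
          · left
            rw [h, h', bot_sup_eq] at hdle
            exact le_bot_iff.1 hdle
  | join hx hy ihx ihy =>
    rename_i x y
    obtain ⟨iax, ibx⟩ := ihx
    obtain ⟨iay, iby⟩ := ihy
    constructor
    · -- (a) for the join
      show x.1 ⊔ y.1 = ⊥ ∨ (x.2 ⊓ y.2).val.1 = ⊥
      rcases iax with h | h
      · rcases iay with h' | h'
        · exact Or.inl (by rw [h, h', bot_sup_eq])
        · exact Or.inr (by rw [inf_val]; show x.2.val.1 ⊓ y.2.val.1 = ⊥; rw [h', inf_bot_eq])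
      · exact Or.inr (by rw [inf_val]; show x.2.val.1 ⊓ y.2.val.1 = ⊥; rw [h, bot_inf_eq])
    · -- (b) for the join
      intro d hd
      rw [inf_val] at hd
      have hd' : d ∈ x.2.val.2 ⊓ y.2.val.2 := hd
      rw [LowerSet.mem_inf_iff] at hd'
      rcases ibx d hd'.1 with h | h | ⟨T, hT1, hT2, hT3, hT4⟩
      · exact Or.inl h
      · -- x.1 = ⊥
        rcases iby d hd'.2 with h' | h' | ⟨T', hT1', hT2', hT3', hT4'⟩
        · exact Or.inl h'
        · exact Or.inr (Or.inl (by show x.1 ⊔ y.1 = ⊥; rw [h, h', bot_sup_eq]))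
        · refine Or.inr (Or.inr ⟨T', hT1', hT2', hT3', ?_⟩)
          show x.1 ⊔ y.1 ≤ T'.sup Prod.fst
          rw [h, bot_sup_eq]
          exact hT4'
      · rcases iby d hd'.2 with h' | h' | ⟨T', hT1', hT2', hT3', hT4'⟩
        · exact Or.inl h'
        · refine Or.inr (Or.inr ⟨T, hT1, hT2, hT3, ?_⟩)
          show x.1 ⊔ y.1 ≤ T.sup Prod.fst
          rw [h', sup_bot_eq]
          exact hT4
        · refine Or.inr (Or.inr ⟨T ∪ T', hT1.mono Finset.subset_union_left, ?_, ?_, ?_⟩)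
          · intro g hg
            rcases Finset.mem_union.1 hg with hg | hg
            · exact hT2 g hg
            · exact hT2' g hg
          · intro g hg
            rcases Finset.mem_union.1 hg with hg | hg
            · exact hT3 g hg
            · exact hT3' g hg
          · show x.1 ⊔ y.1 ≤ (T ∪ T').sup Prod.fst
            rw [Finset.sup_union]
            exact sup_le (hT4.trans le_sup_left) (hT4'.trans le_sup_right)

/-- Choice of a dominating closure element for a generator of the
intersection. -/
noncomputable def vcF (s : Finset (A × L)) (g : A × LS L) : A × L :=
  letI := Classical.propDecidable (∃ v, Tcl (↑s : Set (A × L)) v ∧ g.1 ≤ v.1 ∧ g.2 ≤ iota v.2)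
  if h : ∃ v, Tcl (↑s : Set (A × L)) v ∧ g.1 ≤ v.1 ∧ g.2 ≤ iota v.2 then h.choose
  else (⊥, ⊥)

lemma vcF_spec (s : Finset (A × L)) (g : A × LS L)
    (h : ∃ v, Tcl (↑s : Set (A × L)) v ∧ g.1 ≤ v.1 ∧ g.2 ≤ iota v.2) :
    Tcl (↑s : Set (A × L)) (vcF s g) ∧ g.1 ≤ (vcF s g).1 ∧ g.2 ≤ iota (vcF s g).2 := by
  unfold vcF
  rw [dif_pos h]
  exact h.choose_spec

/-- The cap element associated to a finite subset of generators. -/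
noncomputable def capF (s : Finset (A × L)) (T : Finset (A × LS L)) : A × L :=
  if h : T.Nonempty then
    (T.sup (fun g => (vcF s g).1), T.inf' h (fun g => (vcF s g).2))
  else (⊥, ⊥)

lemma capF_pos (s : Finset (A × L)) {T : Finset (A × LS L)} (h : T.Nonempty) :
    capF s T = (T.sup (fun g => (vcF s g).1), T.inf' h (fun g => (vcF s g).2)) := by
  unfold capF
  rw [dif_pos h]

end Main

/-- Theorem: every weakly amenable lattice is amenable.
If `A` is a lattice with least element such that `A ⊗ L` is a lattice for every
lattice `L` with least element, then `A ⊗ L` is a capped tensor product for every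
lattice `L` with least element. -/
theorem weakly_amenable_implies_amenable (A : Type u) [Lattice A] [OrderBot A]
    (hweak : ∀ (L : Type v) [Lattice L] [OrderBot L], TensorIsLattice A L) :
    ∀ (L : Type v) [Lattice L] [OrderBot L], IsCappedTensorProduct A L := by
  intro L _ _ I hI
  classical
  obtain ⟨s, rfl⟩ := hI
  rw [WAme.biIdealGen_finset]
  set f : A × L → A × WAme2.LS L := fun p => (p.1, WAme2.LS.iota p.2) with hf
  set astar : A := s.sup Prod.fst with hastar
  -- apply the hypothesis in the gadget lattice
  have c1 : IsCompactBiIdeal (WAme.twHull (↑(s.image f) : Set (A × WAme2.LS L))) :=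
    ⟨s.image f, (WAme.biIdealGen_finset _).symm⟩
  have c2 : IsCompactBiIdeal (pureTensor astar (WAme2.LS.tt : WAme2.LS L)) :=
    WAme.pureTensor_compact _ _
  obtain ⟨G, hG⟩ := hweak (WAme2.LS L) _ _ c1 c2
  rw [WAme.biIdealGen_finset] at hG
  -- each generator lies in the intersection
  have hGmem : ∀ g ∈ G,
      g ∈ WAme.twHull (↑(s.image f) : Set (A × WAme2.LS L)) ∩
        pureTensor astar (WAme2.LS.tt : WAme2.LS L) := by
    intro g hg
    rw [hG]
    exact Or.inr ⟨g, WAme.Tcl.base (by exact_mod_cast hg), le_rfl, le_rfl⟩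
  -- hypothesis (HGE) for the invariant
  have HGE : ∀ g ∈ G, g.1 = ⊥ ∨ (g.2).val.1 = ⊥ := by
    intro g hg
    rcases (hGmem g hg).2 with h | h
    · rcases h with h | h
      · exact Or.inl h
      · right
        rw [h]
        rfl
    · right
      have := (WAme2.LS.le_iff.1 h.2).1
      rw [WAme2.LS.tt_val] at this
      exact le_bot_iff.1 this
  -- the valid generators are dominated by closure elements of `s`
  have hval : ∀ g ∈ G, g.1 ≠ ⊥ → g.2 ≠ ⊥ →
      ∃ v, WAme.Tcl (↑s : Set (A × L)) v ∧ g.1 ≤ v.1 ∧ g.2 ≤ WAme2.LS.iota v.2 := by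
    intro g hg h1 h2
    rcases (hGmem g hg).1 with h | ⟨w, hw, hle1, hle2⟩
    · rcases h with h | h
      · exact absurd h h1
      · exact absurd h h2
    · rw [Finset.coe_image] at hw
      obtain ⟨v, hv, rfl⟩ := Tcl_image_rev hw
      exact ⟨v, hv, hle1, hle2⟩
  have inv := tag_invariant G HGE
  -- the main extraction
  have ext1 : ∀ v : A × L, WAme.Tcl (↑s : Set (A × L)) v → v.1 ≠ ⊥ → v.2 ≠ ⊥ →
      ∃ T : Finset (A × WAme2.LS L), T.Nonempty ∧
        (∀ g ∈ T, g ∈ G ∧ g.1 ≠ ⊥ ∧ g.2 ≠ ⊥) ∧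
        (∀ g ∈ T, v.2 ∈ (g.2).val.2) ∧ v.1 ≤ T.sup Prod.fst := by
    intro v hv h1 h2
    have hx : ((v.1, WAme2.LS.iota v.2 ⊓ WAme2.LS.tt) : A × WAme2.LS L) ∈
        WAme.twHull (↑(s.image f) : Set (A × WAme2.LS L)) ∩
          pureTensor astar (WAme2.LS.tt : WAme2.LS L) := by
      constructor
      · refine Or.inr ⟨(v.1, WAme2.LS.iota v.2), ?_, le_rfl, inf_le_left⟩
        rw [Finset.coe_image]
        exact Tcl_image_of hv
      · exact Or.inr ⟨WAme.Tcl_fst_le s hv, inf_le_right⟩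
    rw [hG] at hx
    rcases hx with hx | ⟨w, hw, hle1, hle2⟩
    · rcases hx with hx | hx
      · exact absurd hx h1
      · exact absurd hx (WAme2.LS.iota_inf_tt_ne_bot h2)
    · have hd : v.2 ∈ w.2.val.2 := by
        have := (WAme2.LS.le_iff.1 hle2).2
        rw [WAme2.LS.iota_inf_tt] at this
        exact this (LowerSet.mem_Iic_iff.2 le_rfl)
      rcases (inv w hw).2 v.2 hd with h | h | ⟨T, hT1, hT2, hT3, hT4⟩
      · exact absurd h h2
      · rw [h] at hle1
        exact absurd (le_bot_iff.1 hle1) h1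
      · exact ⟨T, hT1, hT2, hT3, hle1.trans hT4⟩
  -- assemble the cap
  refine ⟨((G.filter (fun g => g.1 ≠ ⊥ ∧ g.2 ≠ ⊥)).powerset.filter
    Finset.Nonempty).image (capF s), ?_⟩
  ext q
  constructor
  · rintro (hq | ⟨v, hv, h1, h2⟩)
    · exact Or.inl hq
    · by_cases hv1 : v.1 = ⊥
      · exact Or.inl (Or.inl (le_bot_iff.1 (hv1 ▸ h1)))
      by_cases hv2 : v.2 = ⊥
      · exact Or.inl (Or.inr (le_bot_iff.1 (hv2 ▸ h2)))
      obtain ⟨T, hTne, hTval, hTd, hTsup⟩ := ext1 v hv hv1 hv2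
      right
      have hTmem : T ∈ (G.filter (fun g => g.1 ≠ ⊥ ∧ g.2 ≠ ⊥)).powerset.filter
          Finset.Nonempty := by
        refine Finset.mem_filter.2 ⟨Finset.mem_powerset.2 ?_, hTne⟩
        intro g hg
        exact Finset.mem_filter.2 ⟨(hTval g hg).1, (hTval g hg).2.1, (hTval g hg).2.2⟩
      refine ⟨capF s T, Finset.mem_image.2 ⟨T, hTmem, rfl⟩, ?_, ?_⟩
      · rw [capF_pos s hTne]
        refine (h1.trans hTsup).trans (Finset.sup_mono_fun ?_)
        intro g hg
        exact (vcF_spec s g (hval g (hTval g hg).1 (hTval g hg).2.1 (hTval g hg).2.2)).2.1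
      · rw [capF_pos s hTne]
        refine h2.trans (Finset.le_inf' hTne _ ?_)
        intro g hg
        have hspec := vcF_spec s g (hval g (hTval g hg).1 (hTval g hg).2.1 (hTval g hg).2.2)
        have := (WAme2.LS.le_iff.1 hspec.2.2).2
        rw [WAme2.LS.iota_val] at this
        exact LowerSet.mem_Iic_iff.1 (this (hTd g hg))
  · rintro (hq | ⟨p, hp, h1, h2⟩)
    · exact Or.inl hq
    · obtain ⟨T, hT, rfl⟩ := Finset.mem_image.1 hp
      have hmem := Finset.mem_filter.1 hT
      have hTne : T.Nonempty := hmem.2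
      have hsub := Finset.mem_powerset.1 hmem.1
      rw [capF_pos s hTne] at h1 h2
      refine Or.inr ⟨(T.sup (fun g => (vcF s g).1), T.inf' hTne (fun g => (vcF s g).2)),
        ?_, h1, h2⟩
      apply WAme.Tcl_supinf
      intro g hg
      have hg' := Finset.mem_filter.1 (hsub hg)
      exact (vcF_spec s g (hval g hg'.1 hg'.2.1 hg'.2.2)).1
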